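/- (Sufficiency direction of generalized NSP for separable concave penalties) Let R : ℝ^N → [0,∞) satisfy R(z) = R(|z|), be separable, concave on the nonnegative orthant, and R(0) = 0. Let A ∈ ℝ^{m×N}. If every nonzero v ∈ ker(A) satisfies R(v_S) < R(v_{S̄}) for all S with #S ≤ s, then every s-sparse vector x ∈ ℝ^N is the unique minimizer of R(z) subject to Az = Ax. -/

import Mathlib

/-- Sufficiency direction of the generalized null space property for separable
concave penalties: if every nonzero `v ∈ ker A` satisfies `R (v_S) < R (v_{S̄})`
for all `S` with `#S ≤ s`, then every `s`-sparse vector `x` is the unique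
minimizer of `R` subject to `A z = A x`. -/
theorem gNSP_sufficient_separable (m N s : ℕ) (A : Matrix (Fin m) (Fin N) ℝ)
    (R : (Fin N → ℝ) → ℝ) (r : Fin N → ℝ → ℝ)
    (hRnonneg : ∀ z : Fin N → ℝ, 0 ≤ R z)
    (hrnonneg : ∀ j t, 0 ≤ r j t)
    (habs : ∀ z : Fin N → ℝ, R z = R (fun j => |z j|))
    (hsep : ∀ z : Fin N → ℝ, R z = ∑ j, r j (z j))
    (hconc : ∀ z z' : Fin N → ℝ, (∀ j, 0 ≤ z j) → (∀ j, 0 ≤ z' j) →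
      ∀ l : ℝ, 0 ≤ l → l ≤ 1 →
      l * R z + (1 - l) * R z' ≤ R (fun j => l * z j + (1 - l) * z' j))
    (hzero : R 0 = 0)
    (hNSP : ∀ v : Fin N → ℝ, A.mulVec v = 0 → v ≠ 0 →
      ∀ S : Finset (Fin N), S.card ≤ s →
        R (fun j => if j ∈ S then v j else 0) <
          R (fun j => if j ∈ S then 0 else v j)) :
    ∀ x : Fin N → ℝ,
      (∃ S : Finset (Fin N), S.card ≤ s ∧ ∀ j ∉ S, x j = 0) →
      ∀ z : Fin N → ℝ, A.mulVec z = A.mulVec x → z ≠ x → R x < R z := by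
  -- each r j vanishes at 0
  have hr0 : ∀ j, r j 0 = 0 := by
    intro j
    have h : ∑ k, r k ((0 : Fin N → ℝ) k) = 0 := by rw [← hsep]; exact hzero
    have h' : ∑ k : Fin N, r k (0:ℝ) = 0 := by simpa using h
    exact (Finset.sum_eq_zero_iff_of_nonneg (fun k _ => hrnonneg k 0)).mp h' j
      (Finset.mem_univ j)
  -- R of a single-coordinate vector
  have hsingle : ∀ (j : Fin N) (t : ℝ), R (fun k => if k = j then t else 0) = r j t := by
    intro j t
    rw [hsep, Finset.sum_eq_single_of_mem j (Finset.mem_univ j)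
      (fun b _ hb => by simp [hb, hr0])]
    simp
  -- r j is even in the sense r j t = r j |t|
  have habs' : ∀ j t, r j t = r j |t| := by
    intro j t
    have h1 := hsingle j t
    have h2 := habs (fun k => if k = j then t else 0)
    have h3 : (fun k => |if k = j then t else (0:ℝ)|) = (fun k => if k = j then |t| else 0) := by
      funext k; split <;> simp
    rw [h2, h3, hsingle] at h1
    exact h1.symm
  -- per-coordinate concavity on [0, ∞)
  have hconc1 : ∀ j (a c : ℝ), 0 ≤ a → 0 ≤ c → ∀ l : ℝ, 0 ≤ l → l ≤ 1 →
      l * r j a + (1 - l) * r j c ≤ r j (l * a + (1 - l) * c) := by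
    intro j a c ha hc l hl0 hl1
    have h := hconc (fun k => if k = j then a else 0) (fun k => if k = j then c else 0)
      (fun k => by split <;> simp [ha])
      (fun k => by split <;> simp [hc]) l hl0 hl1
    have heq : (fun k => l * (if k = j then a else (0:ℝ)) + (1 - l) * (if k = j then c else 0))
        = (fun k => if k = j then l * a + (1 - l) * c else 0) := by
      funext k; split <;> ring
    rw [hsingle, hsingle, heq, hsingle] at h
    exact h
  -- monotone on [0, ∞)
  have hmono : ∀ j (a b : ℝ), 0 ≤ a → a ≤ b → r j a ≤ r j b := by
    intro j a b ha hab
    by_contra hlt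
    push_neg at hlt
    have hab' : a < b := by
      rcases lt_or_eq_of_le hab with h | h
      · exact h
      · rw [h] at hlt; exact absurd le_rfl (not_le.mpr hlt)
    have hd : (0:ℝ) < b - a := sub_pos.mpr hab'
    have hεpos : (0:ℝ) < r j a - r j b := sub_pos.mpr hlt
    have hra : 0 < r j a := lt_of_le_of_lt (hrnonneg j b) hlt
    obtain ⟨t, htpos, htε⟩ : ∃ t : ℝ, 0 < t ∧ t * (r j a - r j b) = (b - a) * r j a :=
      ⟨(b - a) * r j a / (r j a - r j b),
        div_pos (mul_pos hd hra) hεpos, by field_simp⟩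
    have hden : (0:ℝ) < t + (b - a) := by linarith
    have hl0 : (0:ℝ) ≤ t / (t + (b - a)) := le_of_lt (div_pos htpos hden)
    have hl1 : t / (t + (b - a)) ≤ 1 := by rw [div_le_one hden]; linarith
    have hcomb : (t / (t + (b - a))) * a + (1 - t / (t + (b - a))) * (b + t) = b := by
      field_simp
      ring
    have hkey := hconc1 j a (b + t) ha (by linarith) _ hl0 hl1
    rw [hcomb] at hkey
    have h1l : 1 - t / (t + (b - a)) = (b - a) / (t + (b - a)) := by field_simp; ring
    rw [h1l, div_mul_eq_mul_div, div_mul_eq_mul_div, ← add_div,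
      div_le_iff₀ hden] at hkey
    have hrc := hrnonneg j (b + t)
    nlinarith [mul_pos hd hεpos, mul_nonneg (le_of_lt hd) hrc]
  -- subadditive on [0, ∞)
  have hsub : ∀ j (a b : ℝ), 0 ≤ a → 0 ≤ b → r j (a + b) ≤ r j a + r j b := by
    intro j a b ha hb
    by_cases hab : a + b = 0
    · have ha0 : a = 0 := by linarith
      have hb0 : b = 0 := by linarith
      rw [ha0, hb0]
      simp [hr0]
    · have hpos : 0 < a + b := lt_of_le_of_ne (add_nonneg ha hb) (Ne.symm hab)
      have h1 := hconc1 j (a + b) 0 (le_of_lt hpos) le_rfl (a / (a + b))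
        (by positivity) (by rw [div_le_one hpos]; linarith)
      have h2 := hconc1 j (a + b) 0 (le_of_lt hpos) le_rfl (b / (a + b))
        (by positivity) (by rw [div_le_one hpos]; linarith)
      have e1 : (a / (a + b)) * (a + b) + (1 - a / (a + b)) * 0 = a := by field_simp; ring
      have e2 : (b / (a + b)) * (a + b) + (1 - b / (a + b)) * 0 = b := by field_simp; ring
      rw [e1, hr0, mul_zero, add_zero] at h1
      rw [e2, hr0, mul_zero, add_zero] at h2
      have hsum : a / (a + b) + b / (a + b) = 1 := by field_simp
      have h3 : a / (a + b) * r j (a + b) + b / (a + b) * r j (a + b) = r j (a + b) := by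
        rw [← add_mul, hsum, one_mul]
      linarith
  -- triangle inequality for r j
  have htri : ∀ j (u w : ℝ), r j (u + w) ≤ r j u + r j w := by
    intro j u w
    calc r j (u + w) = r j |u + w| := habs' j _
      _ ≤ r j (|u| + |w|) := hmono j _ _ (abs_nonneg _) (abs_add_le u w)
      _ ≤ r j |u| + r j |w| := hsub j _ _ (abs_nonneg _) (abs_nonneg _)
      _ = r j u + r j w := by rw [← habs', ← habs']
  -- main argument
  rintro x ⟨S, hScard, hSsupp⟩ z hAz hzx
  have hAv : A.mulVec (x - z) = 0 := by
    rw [Matrix.mulVec_sub, hAz, sub_self]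
  have hvne : x - z ≠ 0 := sub_ne_zero.mpr (Ne.symm hzx)
  have hnsp := hNSP (x - z) hAv hvne S hScard
  have hRS : R (fun j => if j ∈ S then (x - z) j else 0) = ∑ j ∈ S, r j (x j - z j) := by
    rw [hsep, ← Finset.sum_subset (Finset.subset_univ S)
      (fun j _ hj => by simp [hj, hr0])]
    exact Finset.sum_congr rfl (fun j hj => by simp [hj, Pi.sub_apply])
  have hRSc : R (fun j => if j ∈ S then 0 else (x - z) j) = ∑ j ∈ Sᶜ, r j (x j - z j) := by
    rw [hsep, ← Finset.sum_subset (Finset.subset_univ Sᶜ)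
      (fun j _ hj => by
        have : j ∈ S := by simpa using hj
        simp [this, hr0])]
    refine Finset.sum_congr rfl (fun j hj => ?_)
    have : j ∉ S := Finset.mem_compl.mp hj
    simp [this, Pi.sub_apply]
  rw [hRS, hRSc] at hnsp
  have hx : R x ≤ (∑ j ∈ S, r j (x j - z j)) + ∑ j ∈ S, r j (z j) := by
    rw [hsep, ← Finset.sum_subset (Finset.subset_univ S)
      (fun j _ hj => by rw [hSsupp j hj, hr0])]
    calc ∑ j ∈ S, r j (x j)
        ≤ ∑ j ∈ S, (r j (x j - z j) + r j (z j)) := by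
          refine Finset.sum_le_sum (fun j _ => ?_)
          have h := htri j (x j - z j) (z j)
          simpa using h
      _ = _ := Finset.sum_add_distrib
  have hzeq : R z = (∑ j ∈ Sᶜ, r j (x j - z j)) + ∑ j ∈ S, r j (z j) := by
    rw [hsep]
    have h1 : ∑ j ∈ Sᶜ, r j (x j - z j) = ∑ j ∈ Sᶜ, r j (z j) := by
      refine Finset.sum_congr rfl (fun j hj => ?_)
      have hj' : j ∉ S := Finset.mem_compl.mp hj
      have : x j - z j = -z j := by rw [hSsupp j hj']; ring
      rw [this, habs' j (-z j), abs_neg, ← habs']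
    rw [h1, add_comm, Finset.sum_add_sum_compl]
  linarith
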